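/- arXiv:0811.3187 — 2 statements merged into one kernel-verified Lean document; each statement's English description precedes it below -/
import Mathlib

section
/- Let H be a separable Hilbert space with orthonormal basis (e_n)_{n∈ℕ}, let 0 < q < 1 and let L_q be the bounded operator defined by L_q e_n = q^n e_n. Let v = (√6/π)·∑_{n∈ℕ} (n+1)^{-1} e_n and T = |e_0⟩⟨v| (the rank-one operator T x = ⟨v, x⟩ e_0). Then ‖v‖ = 1, L_q T = T, and the sequence n ↦ n·⟨e_0, T e_n⟩ does not tend to 0, i.e. T is not a rapid decay matrix. -/
open scoped RealInnerProductSpace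

open Real Filter

lemma basel_succ : HasSum (fun n : ℕ => (((n : ℝ) + 1)⁻¹) ^ 2) (π ^ 2 / 6) := by
  have h2 : HasSum (fun n : ℕ => (1 : ℝ) / ((n + 1 : ℕ) : ℝ) ^ 2) (π ^ 2 / 6) := by
    refine (hasSum_nat_add_iff (f := fun n : ℕ => (1 : ℝ) / (n : ℝ) ^ 2) 1).mpr ?_
    simpa using hasSum_zeta_two
  refine h2.congr_fun fun n => ?_
  push_cast
  rw [one_div, inv_pow]

theorem rank_one_not_rapid_decay (H : Type*) [NormedAddCommGroup H] [InnerProductSpace ℝ H]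
    (e : HilbertBasis ℕ ℝ H) (q : ℝ) (hq0 : 0 < q) (hq1 : q < 1)
    (L T : H →L[ℝ] H)
    (hL : ∀ n : ℕ, L (e n) = q ^ n • e n)
    (v : H) (hv : v = (Real.sqrt 6 / Real.pi) • ∑' n : ℕ, ((n : ℝ) + 1)⁻¹ • e n)
    (hT : ∀ x : H, T x = ⟪v, x⟫ • e 0) :
    ‖v‖ = 1 ∧ (∀ x : H, L (T x) = T x) ∧
      ¬ Filter.Tendsto (fun n : ℕ => (n : ℝ) * ⟪e 0, T (e n)⟫) Filter.atTop (nhds 0) := by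
  set c : ℝ := Real.sqrt 6 / Real.pi with hc
  have hπ : (0:ℝ) < π := Real.pi_pos
  have hcpos : 0 < c := div_pos (Real.sqrt_pos.2 (by norm_num)) hπ
  -- the lp element
  have hmem : Memℓp (fun n : ℕ => ((n : ℝ) + 1)⁻¹) 2 := by
    apply memℓp_gen
    have : (2 : ENNReal).toReal = 2 := by norm_num
    rw [this]
    refine basel_succ.summable.congr fun n => ?_
    rw [Real.rpow_two, Real.norm_eq_abs, sq_abs]
  set f : lp (fun _ : ℕ => ℝ) 2 := ⟨_, hmem⟩ with hf
  have hfn : ∀ n, f n = ((n : ℝ) + 1)⁻¹ := fun n => rfl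
  have hsum : HasSum (fun n : ℕ => f n • e n) (e.repr.symm f) := e.hasSum_repr_symm f
  have htsum : (∑' n : ℕ, ((n : ℝ) + 1)⁻¹ • e n) = e.repr.symm f := hsum.tsum_eq
  have hvf : v = c • e.repr.symm f := by rw [hv, htsum]
  have hnormf : ‖f‖ ^ 2 = π ^ 2 / 6 := by
    have h := lp.norm_rpow_eq_tsum (p := 2) (by norm_num) f
    have h2 : (2 : ENNReal).toReal = 2 := by norm_num
    rw [h2] at h
    rw [← Real.rpow_natCast, Nat.cast_ofNat, h, ← basel_succ.tsum_eq]
    congr 1; ext n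
    rw [hfn, Real.norm_eq_abs, Real.rpow_two, sq_abs]
  have hnormv : ‖v‖ = 1 := by
    have : ‖v‖ ^ 2 = 1 := by
      rw [hvf, norm_smul, Real.norm_eq_abs, abs_of_pos hcpos,
        e.repr.symm.norm_map, mul_pow, hnormf, hc, div_pow, Real.sq_sqrt (by norm_num : (6:ℝ) ≥ 0)]
      field_simp
    nlinarith [norm_nonneg v]
  refine ⟨hnormv, ?_, ?_⟩
  · intro x
    rw [hT x, map_smul, hL 0, pow_zero, one_smul]
  · -- inner products
    have hinner : ∀ n : ℕ, ⟪v, e n⟫ = c * ((n : ℝ) + 1)⁻¹ := by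
      intro n
      rw [real_inner_comm, ← e.repr_apply_apply, hvf, map_smul]
      have : e.repr (e.repr.symm f) = f := e.repr.apply_symm_apply f
      rw [this]
      rfl
    have hval : ∀ n : ℕ, ((n:ℝ)) * ⟪e 0, T (e n)⟫ = c * ((n:ℝ) * ((n : ℝ) + 1)⁻¹) := by
      intro n
      rw [hT, real_inner_smul_right, hinner n, real_inner_self_eq_norm_sq,
        e.orthonormal.1 0]
      ring
    have hlim : Tendsto (fun n : ℕ => (n : ℝ) * ⟪e 0, T (e n)⟫) atTop (nhds c) := by
      have h1 : Tendsto (fun n : ℕ => (n : ℝ) / ((n:ℝ) + 1)) atTop (nhds 1) :=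
        tendsto_natCast_div_add_atTop 1
      have := h1.const_mul c
      rw [mul_one] at this
      refine this.congr fun n => ?_
      rw [hval n, div_eq_mul_inv]
    intro hcon
    have : c = 0 := tendsto_nhds_unique hlim hcon
    exact absurd this (ne_of_gt hcpos)
end

section
/- Let 0 < q < 1 and define α_N(l)² := (1+q²)(1-t)·u with u := [l+N][l-N][2l]/(q[2l+1][l]²)·(1-t+q^{-2N}[2l]^{-2}[l]²(t-1+q^{2N})²)/(1-t) for half-integers N ≠ 0, real t ∈ [0,1) and [x] := (q^x-q^{-x})/(q-q^{-1}). Then there exists a constant C (depending on q, N, t but not on l) such that |u - 1| ≤ C·q^{2l} for all half-integers l ≥ 1. -/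
/-- The q-analogue `[x] = (q^x - q^{-x})/(q - q⁻¹)`, with `q^x = exp (x log q)`. -/
noncomputable def qan (q x : ℝ) : ℝ := (q ^ x - q ^ (-x)) / (q - q⁻¹)

set_option maxHeartbeats 1600000 in
private lemma step1 (c s p : ℝ) (hc : c ≠ 0) (hs : s ≠ 0) (hp : p ≠ 0)
    (h1 : s - 1 ≠ 0) (h2 : s + 1 ≠ 0) :
    (p^2)⁻¹ * (((s^2 - 1)^2/(c^2*s^2)))⁻¹ * ((s - 1)^2/(c^2*s))
      = (p^2)⁻¹ * (s/(s+1)^2) := by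
  have h5 : s^2 - 1 ≠ 0 := by
    have e : s^2 - 1 = (s - 1)*(s + 1) := by ring
    rw [e]; exact mul_ne_zero h1 h2
  rw [inv_div]
  field_simp
  ring

set_option maxHeartbeats 1600000 in
private lemma step2 (c q s p : ℝ) (hc : c ≠ 0) (hq : q ≠ 0) (hs : s ≠ 0) (hp : p ≠ 0)
    (h1 : s - 1 ≠ 0) (h2 : s + 1 ≠ 0) (h3 : s^2*q^2 - 1 ≠ 0) :
    ((s*p^2 - 1)*(s - p^2)/(c^2*s*p^2)) * ((s^2 - 1)/(c*s))
      / (q * ((s^2*q^2 - 1)/(c*s*q)) * ((s - 1)^2/(c^2*s)))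
    = (s*p^2 - 1)*(s - p^2)*(s + 1) / (p^2*(s^2*q^2 - 1)*(s - 1)) := by
  field_simp
  ring

set_option maxHeartbeats 1600000 in
private lemma step3 (q t s p : ℝ) (hq : q ≠ 0) (hs : s ≠ 0) (hp : p ≠ 0)
    (ht : 1 - t ≠ 0)
    (h1 : s - 1 ≠ 0) (h2 : s + 1 ≠ 0) (h3 : s^2*q^2 - 1 ≠ 0) :
    (s*p^2 - 1)*(s - p^2)*(s + 1) / (p^2*(s^2*q^2 - 1)*(s - 1))
        * ((1 - t + (p^2)⁻¹ * (s/(s+1)^2) * (t - 1 + p^2) ^ 2) / (1 - t))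
      - 1
    = s * (((1 - q^2)*s^4
        + (3 + (t - 1 + p ^ 2) ^ 2 / (p ^ 2 * (1 - t)) - (p ^ 2 + (p ^ 2)⁻¹) - q^2)*s^3
        + ((3 + (t - 1 + p ^ 2) ^ 2 / (p ^ 2 * (1 - t))) * (1 - (p ^ 2 + (p ^ 2)⁻¹)) + 2 + q^2)
            * (s^2 + s)
        + (2 + (t - 1 + p ^ 2) ^ 2 / (p ^ 2 * (1 - t)) - (p ^ 2 + (p ^ 2)⁻¹)))
      / ((q^2*s^2 - 1)*(s - 1)*(s + 1)^2)) := by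
  have h4 : q^2*s^2 - 1 ≠ 0 := by rw [mul_comm]; exact h3
  field_simp
  ring

set_option maxHeartbeats 3200000 in
theorem u_l_close_to_one (q t N : ℝ) (hq0 : 0 < q) (hq1 : q < 1)
    (hN : ∃ k : ℤ, N = (k : ℝ) / 2) (hN0 : N ≠ 0) (ht0 : 0 ≤ t) (ht1 : t < 1) :
    ∃ C : ℝ, 0 < C ∧ ∀ l : ℝ, (∃ m : ℤ, l = (m : ℝ) / 2) → 1 ≤ l →
      |qan q (l + N) * qan q (l - N) * qan q (2 * l)
          / (q * qan q (2 * l + 1) * (qan q l) ^ 2)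
          * ((1 - t + q ^ (-(2 * N)) * ((qan q (2 * l)) ^ 2)⁻¹ * (qan q l) ^ 2
              * (t - 1 + q ^ (2 * N)) ^ 2) / (1 - t))
        - 1| ≤ C * q ^ (2 * l) := by
  have hqne : q ≠ 0 := ne_of_gt hq0
  set p : ℝ := q ^ N with hpdef
  have hp : 0 < p := Real.rpow_pos_of_pos hq0 N
  have hpne : p ≠ 0 := ne_of_gt hp
  have hq2 : q^2 < 1 := by nlinarith
  have htne : (1:ℝ) - t ≠ 0 := by linarith
  -- bound the rational function on the compact interval
  have hDne : ∀ x ∈ Set.Icc (0:ℝ) (q^2), (q^2*x^2 - 1)*(x - 1)*(x + 1)^2 ≠ 0 := by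
    intro x hx
    obtain ⟨hx0, hx1⟩ := hx
    have h1 : x < 1 := lt_of_le_of_lt hx1 hq2
    have e1 : q^2*x^2 - 1 ≠ 0 := by nlinarith
    have e2 : x - 1 ≠ 0 := by nlinarith
    have e3 : (x + 1)^2 ≠ 0 := by positivity
    exact mul_ne_zero (mul_ne_zero e1 e2) e3
  obtain ⟨C₀, hC₀⟩ := (isCompact_Icc (a := (0:ℝ)) (b := q^2)).exists_bound_of_continuousOn
    (f := fun s : ℝ => ((1 - q^2)*s^4
        + (3 + (t - 1 + p ^ 2) ^ 2 / (p ^ 2 * (1 - t)) - (p ^ 2 + (p ^ 2)⁻¹) - q^2)*s^3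
        + ((3 + (t - 1 + p ^ 2) ^ 2 / (p ^ 2 * (1 - t))) * (1 - (p ^ 2 + (p ^ 2)⁻¹)) + 2 + q^2)
            * (s^2 + s)
        + (2 + (t - 1 + p ^ 2) ^ 2 / (p ^ 2 * (1 - t)) - (p ^ 2 + (p ^ 2)⁻¹)))
      / ((q^2*s^2 - 1)*(s - 1)*(s + 1)^2))
    (ContinuousOn.div (by fun_prop) (by fun_prop) hDne)
  have hC₀0 : 0 ≤ C₀ := by
    have := hC₀ 0 ⟨le_refl 0, by positivity⟩
    exact le_trans (norm_nonneg _) this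
  refine ⟨C₀ + 1, by linarith, ?_⟩
  intro l _ hl
  set r : ℝ := q ^ l with hrdef
  have hr : 0 < r := Real.rpow_pos_of_pos hq0 l
  have hrne : r ≠ 0 := ne_of_gt hr
  have hrq : r ≤ q := by
    have h := Real.rpow_le_rpow_of_exponent_ge hq0 hq1.le hl
    rwa [Real.rpow_one] at h
  have hr1 : r < 1 := lt_of_le_of_lt hrq hq1
  set s : ℝ := r ^ 2 with hsdef
  have hs0 : (0:ℝ) < s := by positivity
  have hsne : s ≠ 0 := ne_of_gt hs0
  have hs1 : s < 1 := by nlinarith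
  have hsm1 : s - 1 ≠ 0 := by nlinarith
  have hsp1 : s + 1 ≠ 0 := by nlinarith
  have hs3 : s^2*q^2 - 1 ≠ 0 := by nlinarith
  have hsle : s ≤ q^2 := by nlinarith
  have hsmem : s ∈ Set.Icc (0:ℝ) (q^2) := ⟨hs0.le, hsle⟩
  set c : ℝ := q - q⁻¹ with hcdef
  have hc : c ≠ 0 := by
    intro h
    have h2 : q⁻¹ = q := by rw [hcdef] at h; linarith
    have h3 : q * q⁻¹ = 1 := mul_inv_cancel₀ hqne
    rw [h2] at h3; nlinarith
  -- rpow rewrites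
  have eneg : ∀ x : ℝ, q ^ (-x) = (q ^ x)⁻¹ := fun x => Real.rpow_neg hq0.le x
  have e1 : q ^ (l + N) = r * p := Real.rpow_add hq0 l N
  have e2 : q ^ (l - N) = r / p := Real.rpow_sub hq0 l N
  have e3 : q ^ (2 * l) = s := by
    rw [two_mul, Real.rpow_add hq0, hsdef]; ring
  have e4 : q ^ (2 * l + 1) = s * q := by
    rw [Real.rpow_add hq0, Real.rpow_one, e3]
  have e5 : q ^ (2 * N) = p ^ 2 := by
    rw [two_mul, Real.rpow_add hq0, hpdef]; ring
  have e6 : q ^ (-(2 * N)) = (p ^ 2)⁻¹ := by rw [eneg, e5]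
  -- rewrite each qan factor
  have hA : qan q (l + N) * qan q (l - N)
      = (s*p^2 - 1)*(s - p^2)/(c^2*s*p^2) := by
    simp only [qan, eneg, e1, e2]
    rw [← hcdef, hsdef, inv_div]
    field_simp
  have hB : qan q (2 * l) = (s^2 - 1)/(c*s) := by
    simp only [qan, eneg, e3]
    rw [← hcdef]
    field_simp
  have hBsq : ((s^2 - 1)/(c*s))^2 = (s^2 - 1)^2/(c^2*s^2) := by
    rw [div_pow, mul_pow]
  have hC : qan q (2 * l + 1) = (s^2*q^2 - 1)/(c*s*q) := by
    simp only [qan, eneg, e4]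
    rw [← hcdef]
    field_simp
  have hE : (qan q l) ^ 2 = (s - 1)^2/(c^2*s) := by
    simp only [qan, eneg]
    rw [← hrdef, ← hcdef, hsdef, div_pow]
    field_simp
  have key : qan q (l + N) * qan q (l - N) * qan q (2 * l)
          / (q * qan q (2 * l + 1) * (qan q l) ^ 2)
          * ((1 - t + q ^ (-(2 * N)) * ((qan q (2 * l)) ^ 2)⁻¹ * (qan q l) ^ 2
              * (t - 1 + q ^ (2 * N)) ^ 2) / (1 - t))
        - 1
      = s * (((1 - q^2)*s^4
        + (3 + (t - 1 + p ^ 2) ^ 2 / (p ^ 2 * (1 - t)) - (p ^ 2 + (p ^ 2)⁻¹) - q^2)*s^3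
        + ((3 + (t - 1 + p ^ 2) ^ 2 / (p ^ 2 * (1 - t))) * (1 - (p ^ 2 + (p ^ 2)⁻¹)) + 2 + q^2)
            * (s^2 + s)
        + (2 + (t - 1 + p ^ 2) ^ 2 / (p ^ 2 * (1 - t)) - (p ^ 2 + (p ^ 2)⁻¹)))
      / ((q^2*s^2 - 1)*(s - 1)*(s + 1)^2)) := by
    rw [hA, hB, hC, hE, e5, e6, hBsq,
      step1 c s p hc hsne hpne hsm1 hsp1,
      step2 c q s p hc hqne hsne hpne hsm1 hsp1 hs3]
    exact step3 q t s p hqne hsne hpne htne hsm1 hsp1 hs3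
  rw [key, e3, abs_mul, abs_of_pos hs0]
  have hb := hC₀ s hsmem
  rw [Real.norm_eq_abs] at hb
  have habs : (0:ℝ) ≤ |((1 - q^2)*s^4
        + (3 + (t - 1 + p ^ 2) ^ 2 / (p ^ 2 * (1 - t)) - (p ^ 2 + (p ^ 2)⁻¹) - q^2)*s^3
        + ((3 + (t - 1 + p ^ 2) ^ 2 / (p ^ 2 * (1 - t))) * (1 - (p ^ 2 + (p ^ 2)⁻¹)) + 2 + q^2)
            * (s^2 + s)
        + (2 + (t - 1 + p ^ 2) ^ 2 / (p ^ 2 * (1 - t)) - (p ^ 2 + (p ^ 2)⁻¹)))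
      / ((q^2*s^2 - 1)*(s - 1)*(s + 1)^2)| := abs_nonneg _
  nlinarith [hs0.le]
end
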